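/- Let M be a totally ordered cancellative commutative monoid and let R be an M-graded commutative ring. If f is a zero-divisor element of R (i.e., gf = 0 for some nonzero g ∈ R), then there exists a nonzero homogeneous element g ∈ R such that gf = 0. -/

import Mathlib

open DirectSum

private lemma homog_mul_decompose_eq_zero
    {M : Type*} [AddCommMonoid M] [LinearOrder M] [IsOrderedCancelAddMonoid M] [DecidableEq M]
    {R : Type*} [CommRing R] (𝒜 : M → AddSubgroup R) [GradedRing 𝒜]
    {a g : R} {i : M} (ha : a ∈ 𝒜 i) (h : a * g = 0) (j : M) :
    a * (DirectSum.decompose 𝒜 g j : R) = 0 := by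
  letI : AddLeftCancelMonoid M := { ‹AddCommMonoid M›, (inferInstance : IsLeftCancelAdd M) with }
  have key := DirectSum.coe_decompose_mul_add_of_left_mem 𝒜 (j := j) ha (b := g)
  rw [h, DirectSum.decompose_zero] at key
  simpa using key.symm

/-- If `f` is a zero-divisor of an `M`-graded commutative ring with `M` a totally ordered
cancellative commutative monoid, then `f` is annihilated by some nonzero homogeneous element. -/
theorem zeroDivisor_killed_by_homogeneous
    {M : Type*} [AddCommMonoid M] [LinearOrder M] [IsOrderedCancelAddMonoid M] [DecidableEq M]
    {R : Type*} [CommRing R] (𝒜 : M → AddSubgroup R) [GradedRing 𝒜]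
    (f : R) (hf : ∃ g : R, g ≠ 0 ∧ g * f = 0) :
    ∃ g : R, g ≠ 0 ∧ SetLike.IsHomogeneousElem 𝒜 g ∧ g * f = 0 := by
  classical
  have hex : ∃ n : ℕ, ∃ g : R, g ≠ 0 ∧ g * f = 0 ∧
      ((DirectSum.decompose 𝒜 g).support.card = n) := by
    obtain ⟨g, hg, hgf⟩ := hf
    exact ⟨_, g, hg, hgf, rfl⟩
  obtain ⟨g, hg0, hgf, hcard⟩ := Nat.find_spec hex
  have hmin : ∀ g' : R, g' ≠ 0 → g' * f = 0 →
      Nat.find hex ≤ ((DirectSum.decompose 𝒜 g').support).card :=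
    fun g' h1 h2 => Nat.find_min' hex ⟨g', h1, h2, rfl⟩
  have hsupp_ne : ((DirectSum.decompose 𝒜 g).support).Nonempty := by
    rcases Finset.eq_empty_or_nonempty ((DirectSum.decompose 𝒜 g).support) with h | h
    · exfalso
      apply hg0
      have hs := DirectSum.sum_support_decompose 𝒜 g
      rw [h, Finset.sum_empty] at hs
      exact hs.symm
    · exact h
  set m := ((DirectSum.decompose 𝒜 g).support).max' hsupp_ne with hm
  have hmmem : m ∈ (DirectSum.decompose 𝒜 g).support := Finset.max'_mem _ _
  have hmmax : ∀ j ∈ (DirectSum.decompose 𝒜 g).support, j ≤ m :=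
    fun j hj => Finset.le_max' _ _ hj
  -- key claim : every homogeneous component of `f` annihilates `g`
  have key : ∀ N : ℕ, ∀ i : M,
      (((DirectSum.decompose 𝒜 f).support.filter (fun j => i < j)).card ≤ N) →
      (DirectSum.decompose 𝒜 f i : R) * g = 0 := by
    intro N
    induction N using Nat.strong_induction_on with
    | _ N IH =>
    intro i hN
    by_cases hi : i ∈ (DirectSum.decompose 𝒜 f).support
    swap
    · rw [DFinsupp.notMem_support_iff] at hi
      rw [hi]
      simp
    have IH' : ∀ k ∈ (DirectSum.decompose 𝒜 f).support, i < k →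
        (DirectSum.decompose 𝒜 f k : R) * g = 0 := by
      intro k hk hik
      have hsub : (DirectSum.decompose 𝒜 f).support.filter (fun j => k < j) ⊂
          (DirectSum.decompose 𝒜 f).support.filter (fun j => i < j) := by
        constructor
        · intro t ht
          simp only [Finset.mem_filter] at ht ⊢
          exact ⟨ht.1, lt_trans hik ht.2⟩
        · intro hsub'
          have hmem : k ∈ (DirectSum.decompose 𝒜 f).support.filter (fun j => k < j) := by
            apply hsub'
            simp [hk, hik]
          simp at hmem
      have hcardlt := Finset.card_lt_card hsub
      exact IH _ (lt_of_lt_of_le hcardlt hN) k le_rfl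
    -- step 1 : the top component of g kills the i-th component of f
    have step1 : (DirectSum.decompose 𝒜 g m : R) * (DirectSum.decompose 𝒜 f i : R) = 0 := by
      have hz : ((DirectSum.decompose 𝒜 g * DirectSum.decompose 𝒜 f) (m + i) : R) = 0 := by
        rw [← DirectSum.decompose_mul, hgf, DirectSum.decompose_zero]
        simp
      rw [DirectSum.coe_mul_apply] at hz
      rw [← hz]
      symm
      apply Finset.sum_eq_single_of_mem (⟨m, i⟩ : M × M)
      · simp only [Finset.mem_filter, Finset.mem_product]
        exact ⟨⟨hmmem, hi⟩, by simp⟩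
      · rintro ⟨j, k⟩ hjk hne
        simp only [Finset.mem_filter, Finset.mem_product] at hjk
        obtain ⟨⟨hj, hk⟩, hsum⟩ := hjk
        rcases lt_trichotomy i k with h | h | h
        · have h1 := IH' k hk h
          have h2 := homog_mul_decompose_eq_zero 𝒜 (SetLike.coe_mem _) h1 j
          rw [mul_comm]
          exact h2
        · exfalso
          apply hne
          subst h
          have : j = m := add_right_cancel hsum
          simp [this]
        · exfalso
          have hjm := hmmax j hj
          have hlt : j + k < m + i :=
            lt_of_le_of_lt (add_le_add_left hjm k) (add_lt_add_right h m)
          exact absurd hsum (ne_of_lt hlt)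
    -- step 2 : the i-th component of f kills g
    by_contra hne
    set h := (DirectSum.decompose 𝒜 f i : R) * g with hh
    have hhf : h * f = 0 := by rw [hh, mul_assoc, hgf, mul_zero]
    have hle := hmin h hne hhf
    have hsub : (DirectSum.decompose 𝒜 h).support ⊆
        (((DirectSum.decompose 𝒜 g).support.erase m).image (fun j => i + j)) := by
      intro t ht
      rw [DFinsupp.mem_support_iff] at ht
      have hdh : DirectSum.decompose 𝒜 h =
          DirectSum.of (fun n => 𝒜 n) i (DirectSum.decompose 𝒜 f i) *
            DirectSum.decompose 𝒜 g := by
        rw [hh, DirectSum.decompose_mul, DirectSum.decompose_coe]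
      have hco : ((DirectSum.decompose 𝒜 h t : R)) ≠ 0 := by
        intro h0
        exact ht (Subtype.ext h0)
      rw [hdh, DirectSum.coe_mul_apply] at hco
      obtain ⟨⟨j, k⟩, hjk, hterm⟩ := Finset.exists_ne_zero_of_sum_ne_zero hco
      simp only [Finset.mem_filter, Finset.mem_product] at hjk
      obtain ⟨⟨hj, hk⟩, hsum⟩ := hjk
      have hxne : (DirectSum.decompose 𝒜 f i) ≠ 0 := DFinsupp.mem_support_iff.mp hi
      rw [DirectSum.support_of _ _ hxne, Finset.mem_singleton] at hj
      subst hj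
      rw [DirectSum.of_eq_same] at hterm
      have hkm : k ≠ m := by
        intro hkm
        apply hterm
        rw [hkm, mul_comm]
        exact step1
      exact Finset.mem_image.mpr ⟨k, Finset.mem_erase.mpr ⟨hkm, hk⟩, hsum⟩
    have hlt : (DirectSum.decompose 𝒜 h).support.card < Nat.find hex := by
      have h1 := Finset.card_le_card hsub
      have h2 := Finset.card_image_le (s := (DirectSum.decompose 𝒜 g).support.erase m)
        (f := fun j => i + j)
      have h3 : ((DirectSum.decompose 𝒜 g).support.erase m).card =
          (DirectSum.decompose 𝒜 g).support.card - 1 := Finset.card_erase_of_mem hmmem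
      have h4 : 0 < (DirectSum.decompose 𝒜 g).support.card := Finset.card_pos.mpr hsupp_ne
      omega
    exact absurd hle (not_le.mpr hlt)
  refine ⟨(DirectSum.decompose 𝒜 g m : R), ?_, ⟨m, SetLike.coe_mem _⟩, ?_⟩
  · intro h0
    exact DFinsupp.mem_support_iff.mp hmmem (Subtype.ext h0)
  · conv_lhs => rw [← DirectSum.sum_support_decompose 𝒜 f]
    rw [Finset.mul_sum]
    apply Finset.sum_eq_zero
    intro k hk
    have hkg := key _ k le_rfl
    have hres := homog_mul_decompose_eq_zero 𝒜 (SetLike.coe_mem _) hkg m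
    rw [mul_comm]
    exact hres
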